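/- Let H be a Hadamard matrix of order M (entries in {−1,1}, Hᵀ H = M·I). Let B₁, …, B_D be M×N matrices with entries in {0,1}, each column of each Bᵢ containing exactly one entry equal to 1, and suppose B = Σᵢ₌₁^D Bᵢ has all entries in {0,1}. Let A be a real number with 2A ≥ D, K a natural number, and assume for every set S of column indices with |S| ≤ K that #{ j : ∃ ℓ ∈ S, B_{j,ℓ} = 1 } ≥ A·|S|. Let Q be the (M·D)×N matrix obtained by vertically stacking H·B₁, …, H·B_D. Then for every ternary vector v ∈ ℝᴺ with ‖v‖₀ ≤ K, ‖Qv‖_∞ ≥ sqrt( (2A − D)·‖v‖₀ / D ). -/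

import Mathlib

open Matrix Finset

open Classical in
/-- Detecting guarantee of the expander-based SCQGT pooling matrix: with `H`
Hadamard of order `M`, blocks `Bᵢ` as in the expander decomposition, `2A ≥ D`, and the
expansion property, the vertical stack `Q` of the `H·Bᵢ` satisfies
`‖Qv‖_∞ ≥ sqrt((2A − D)·‖v‖₀ / D)` for every ternary `v` with `‖v‖₀ ≤ K`.
(`‖·‖` on `Fin D × Fin M → ℝ` is the sup norm.) -/
theorem stmt_8 {M N D : ℕ} (H : Matrix (Fin M) (Fin M) ℝ)
    (hHentries : ∀ i j, H i j = -1 ∨ H i j = 1)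
    (hH : Hᵀ * H = (M : ℝ) • 1)
    (B : Fin D → Matrix (Fin M) (Fin N) ℝ)
    (hBentries : ∀ i j ℓ, B i j ℓ = 0 ∨ B i j ℓ = 1)
    (hcol : ∀ i ℓ, (univ.filter fun j => B i j ℓ = 1).card = 1)
    (hsum : ∀ j ℓ, (∑ i, B i) j ℓ = 0 ∨ (∑ i, B i) j ℓ = 1)
    (A : ℝ) (hAD : (D : ℝ) ≤ 2 * A) (K : ℕ)
    (hexp : ∀ S : Finset (Fin N), S.card ≤ K →
      A * S.card ≤ ((univ.filter fun j => ∃ ℓ ∈ S, (∑ i, B i) j ℓ = 1).card : ℝ))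
    (Q : Matrix (Fin D × Fin M) (Fin N) ℝ)
    (hQ : ∀ p : Fin D × Fin M, ∀ ℓ, Q p ℓ = (H * B p.1) p.2 ℓ)
    (v : Fin N → ℝ) (hv : ∀ ℓ, v ℓ = -1 ∨ v ℓ = 0 ∨ v ℓ = 1)
    (hsupp : (univ.filter fun ℓ => v ℓ ≠ 0).card ≤ K) :
    Real.sqrt ((2 * A - D) * (univ.filter fun ℓ => v ℓ ≠ 0).card / D) ≤
      ‖Q.mulVec v‖ := by
  set S : Finset (Fin N) := univ.filter fun ℓ => v ℓ ≠ 0 with hSdef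
  rcases Nat.eq_zero_or_pos D with hD | hD
  · subst hD
    simp only [Nat.cast_zero, div_zero, Real.sqrt_zero]
    exact norm_nonneg _
  rcases Finset.eq_empty_or_nonempty S with hSe | hSne
  · rw [hSe]
    simp only [Finset.card_empty, Nat.cast_zero, mul_zero, zero_div, Real.sqrt_zero]
    exact norm_nonneg _
  have hM : 0 < M := by
    obtain ⟨ℓ₀, hℓ₀⟩ := hSne
    by_contra hM
    push_neg at hM
    interval_cases M
    have := hcol ⟨0, hD⟩ ℓ₀
    simp at this
  -- the sets of support indices hitting row j in block i
  set T : Fin D → Fin M → Finset (Fin N) :=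
    fun i j => S.filter fun ℓ => B i j ℓ = 1 with hTdef
  have hBv : ∀ i j, (B i).mulVec v j = ∑ ℓ ∈ T i j, v ℓ := by
    intro i j
    have key : ∀ ℓ : Fin N, B i j ℓ * v ℓ = if ℓ ∈ T i j then v ℓ else 0 := by
      intro ℓ
      by_cases hmem : ℓ ∈ T i j
      · rw [if_pos hmem]
        have hb : B i j ℓ = 1 := (Finset.mem_filter.mp hmem).2
        rw [hb, one_mul]
      · rw [if_neg hmem]
        rcases hBentries i j ℓ with hb | hb
        · rw [hb, zero_mul]
        · by_cases hvℓ : v ℓ = 0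
          · rw [hvℓ, mul_zero]
          · have hℓS : ℓ ∈ S := by
              rw [hSdef]
              exact Finset.mem_filter.mpr ⟨Finset.mem_univ ℓ, hvℓ⟩
            have : ℓ ∈ T i j := by
              show ℓ ∈ S.filter fun ℓ => B i j ℓ = 1
              exact Finset.mem_filter.mpr ⟨hℓS, hb⟩
            exact absurd this hmem
    show ∑ ℓ, B i j ℓ * v ℓ = ∑ ℓ ∈ T i j, v ℓ
    rw [Finset.sum_congr rfl fun ℓ _ => key ℓ]
    rw [Finset.sum_ite_mem, Finset.univ_inter]
  -- per-entry lower bound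
  have hper : ∀ i j, 2 * (if (T i j).Nonempty then (1:ℝ) else 0) - (T i j).card
      ≤ ((B i).mulVec v j) ^ 2 := by
    intro i j
    rw [hBv i j]
    rcases Finset.eq_empty_or_nonempty (T i j) with hT | hT
    · simp [hT]
    · rw [if_pos hT]
      rcases Nat.lt_or_ge (T i j).card 2 with hc | hc
      · have hc1 : (T i j).card = 1 := le_antisymm (Nat.lt_succ_iff.mp hc) hT.card_pos
        obtain ⟨ℓ, hℓ⟩ := Finset.card_eq_one.mp hc1
        rw [hc1, hℓ, Finset.sum_singleton]
        have hℓS : ℓ ∈ S := by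
          have : ℓ ∈ T i j := by rw [hℓ]; exact Finset.mem_singleton_self ℓ
          exact (Finset.mem_filter.mp this).1
        rcases hv ℓ with h1 | h1 | h1
        · rw [h1]; norm_num
        · exact absurd h1 (Finset.mem_filter.mp hℓS).2
        · rw [h1]; norm_num
      · have : (2:ℝ) ≤ (T i j).card := by exact_mod_cast hc
        nlinarith [sq_nonneg (∑ ℓ ∈ T i j, v ℓ)]
  -- total multiplicity count
  have hcount : ∑ i : Fin D, ∑ j : Fin M, ((T i j).card : ℝ) = D * S.card := by
    have key : ∀ i : Fin D, ∑ j : Fin M, (T i j).card = S.card := by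
      intro i
      have : ∀ j : Fin M, (T i j).card = ∑ ℓ ∈ S, if B i j ℓ = 1 then 1 else 0 := by
        intro j
        rw [Finset.card_filter]
      simp_rw [this]
      rw [Finset.sum_comm]
      have : ∀ ℓ ∈ S, (∑ j : Fin M, if B i j ℓ = 1 then 1 else 0) = 1 := by
        intro ℓ _
        rw [← Finset.card_filter]
        exact hcol i ℓ
      rw [Finset.sum_congr rfl this, Finset.sum_const, smul_eq_mul, mul_one]
    have step : ∑ i : Fin D, ∑ j : Fin M, ((T i j).card : ℝ) = ∑ _i : Fin D, (S.card : ℝ) := by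
      refine Finset.sum_congr rfl fun i _ => ?_
      rw [← Nat.cast_sum]
      exact_mod_cast congrArg (Nat.cast (R := ℝ)) (key i)
    rw [step, Finset.sum_const, Finset.card_univ, Fintype.card_fin, nsmul_eq_mul]
  -- expansion lower bound on the number of nonempty T i j
  have hind : A * S.card ≤ ∑ i : Fin D, ∑ j : Fin M,
      (if (T i j).Nonempty then (1:ℝ) else 0) := by
    refine le_trans (hexp S hsupp) ?_
    rw [Finset.sum_comm]
    set R : Finset (Fin M) := univ.filter fun j => ∃ ℓ ∈ S, (∑ i, B i) j ℓ = 1 with hR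
    have hnn : ∀ i j, (0:ℝ) ≤ (if (T i j).Nonempty then (1:ℝ) else 0) := by
      intro i j; split <;> norm_num
    have hjR : ∀ j ∈ R, (1:ℝ) ≤ ∑ i : Fin D, (if (T i j).Nonempty then (1:ℝ) else 0) := by
      intro j hj
      obtain ⟨ℓ, hℓS, hℓ1⟩ := (Finset.mem_filter.mp hj).2
      have hex : ∃ i, B i j ℓ = 1 := by
        by_contra hno
        push_neg at hno
        have hz : (∑ i, B i) j ℓ = 0 := by
          rw [Matrix.sum_apply]
          refine Finset.sum_eq_zero fun i _ => ?_
          rcases hBentries i j ℓ with h | h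
          · exact h
          · exact absurd h (hno i)
        rw [hz] at hℓ1
        norm_num at hℓ1
      obtain ⟨i, hi⟩ := hex
      have hTne : (T i j).Nonempty := by
        refine ⟨ℓ, ?_⟩
        show ℓ ∈ S.filter fun ℓ => B i j ℓ = 1
        exact Finset.mem_filter.mpr ⟨hℓS, hi⟩
      have := Finset.single_le_sum (f := fun i => (if (T i j).Nonempty then (1:ℝ) else 0))
        (fun i _ => hnn i j) (Finset.mem_univ i)
      simpa [hTne] using this
    calc (R.card : ℝ) = ∑ _j ∈ R, (1:ℝ) := by rw [Finset.sum_const, nsmul_eq_mul, mul_one]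
      _ ≤ ∑ j ∈ R, ∑ i : Fin D, (if (T i j).Nonempty then (1:ℝ) else 0) :=
          Finset.sum_le_sum hjR
      _ ≤ ∑ j : Fin M, ∑ i : Fin D, (if (T i j).Nonempty then (1:ℝ) else 0) := by
          refine Finset.sum_le_sum_of_subset_of_nonneg (Finset.subset_univ R) fun j _ _ => ?_
          exact Finset.sum_nonneg fun i _ => hnn i j
  -- combinatorial core
  have hcomb : (2 * A - D) * S.card ≤ ∑ i : Fin D, ∑ j : Fin M, ((B i).mulVec v j) ^ 2 := by
    have h1 : ∑ i : Fin D, ∑ j : Fin M,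
        (2 * (if (T i j).Nonempty then (1:ℝ) else 0) - (T i j).card)
        ≤ ∑ i : Fin D, ∑ j : Fin M, ((B i).mulVec v j) ^ 2 := by
      apply Finset.sum_le_sum
      intro i _
      exact Finset.sum_le_sum fun j _ => hper i j
    refine le_trans ?_ h1
    have expand : ∑ i : Fin D, ∑ j : Fin M,
        (2 * (if (T i j).Nonempty then (1:ℝ) else 0) - (T i j).card)
        = 2 * (∑ i : Fin D, ∑ j : Fin M, (if (T i j).Nonempty then (1:ℝ) else 0))
          - ∑ i : Fin D, ∑ j : Fin M, ((T i j).card : ℝ) := by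
      rw [Finset.mul_sum, ← Finset.sum_sub_distrib]
      refine Finset.sum_congr rfl fun i _ => ?_
      rw [Finset.mul_sum, ← Finset.sum_sub_distrib]
    rw [expand, hcount]
    nlinarith [hind]
  -- Hadamard identity
  have hHad : ∀ w : Fin M → ℝ, ∑ j, (H.mulVec w j) ^ 2 = M * ∑ ℓ, (w ℓ) ^ 2 := by
    intro w
    have h1 : ∑ j, (H.mulVec w j) ^ 2 = H.mulVec w ⬝ᵥ H.mulVec w := by
      simp [dotProduct, sq]
    have h2 : H.mulVec w ⬝ᵥ H.mulVec w = (M : ℝ) * (w ⬝ᵥ w) := by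
      rw [Matrix.dotProduct_mulVec, ← Matrix.mulVec_transpose, Matrix.mulVec_mulVec, hH,
        Matrix.smul_mulVec, Matrix.one_mulVec, smul_dotProduct, smul_eq_mul]
    rw [h1, h2]
    congr 1
    simp [dotProduct, sq]
  -- rewrite Q·v
  have hQv : ∀ p : Fin D × Fin M, Q.mulVec v p = H.mulVec ((B p.1).mulVec v) p.2 := by
    intro p
    have h1 : Q.mulVec v p = (H * B p.1).mulVec v p.2 := by
      simp only [Matrix.mulVec, dotProduct]
      exact Finset.sum_congr rfl fun ℓ _ => by show Q p ℓ * v ℓ = (H * B p.1) p.2 ℓ * v ℓ; rw [hQ]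
    rw [h1, ← Matrix.mulVec_mulVec]
  -- ℓ² bound
  have hl2 : (M : ℝ) * ((2 * A - D) * S.card) ≤ ∑ p : Fin D × Fin M, (Q.mulVec v p) ^ 2 := by
    have : ∑ p : Fin D × Fin M, (Q.mulVec v p) ^ 2
        = (M : ℝ) * ∑ i : Fin D, ∑ j : Fin M, ((B i).mulVec v j) ^ 2 := by
      rw [Fintype.sum_prod_type, Finset.mul_sum]
      refine Finset.sum_congr rfl fun i _ => ?_
      rw [← hHad ((B i).mulVec v)]
      refine Finset.sum_congr rfl fun j _ => ?_
      rw [hQv (i, j)]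
    rw [this]
    have hM0 : (0:ℝ) ≤ M := Nat.cast_nonneg M
    exact mul_le_mul_of_nonneg_left hcomb hM0
  -- sup-norm bound
  have hsup : ∑ p : Fin D × Fin M, (Q.mulVec v p) ^ 2 ≤ (D * M : ℝ) * ‖Q.mulVec v‖ ^ 2 := by
    have hb : ∀ p : Fin D × Fin M, (Q.mulVec v p) ^ 2 ≤ ‖Q.mulVec v‖ ^ 2 := by
      intro p
      have h1 : |Q.mulVec v p| ≤ ‖Q.mulVec v‖ := by
        simpa using norm_le_pi_norm (Q.mulVec v) p
      nlinarith [abs_nonneg (Q.mulVec v p), sq_abs (Q.mulVec v p)]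
    calc ∑ p : Fin D × Fin M, (Q.mulVec v p) ^ 2
        ≤ ∑ _p : Fin D × Fin M, ‖Q.mulVec v‖ ^ 2 := Finset.sum_le_sum fun p _ => hb p
      _ = (D * M : ℝ) * ‖Q.mulVec v‖ ^ 2 := by
          rw [Finset.sum_const, Finset.card_univ, Fintype.card_prod, Fintype.card_fin,
            Fintype.card_fin, nsmul_eq_mul]
          push_cast
          ring
  -- finish
  have hfinal : (2 * A - D) * S.card / D ≤ ‖Q.mulVec v‖ ^ 2 := by
    have hMpos : (0:ℝ) < M := Nat.cast_pos.mpr hM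
    have hDpos : (0:ℝ) < D := Nat.cast_pos.mpr hD
    rw [div_le_iff₀ hDpos]
    nlinarith [hl2, hsup]
  calc Real.sqrt ((2 * A - D) * S.card / D) ≤ Real.sqrt (‖Q.mulVec v‖ ^ 2) :=
        Real.sqrt_le_sqrt hfinal
    _ = ‖Q.mulVec v‖ := Real.sqrt_sq (norm_nonneg _)
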